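/- Let E : [0,∞) → ℝ be defined by E(t) = (ρ/2)∫₀ᴸ|v_t|²dx + (α/2)∫₀ᴸ|v_x|²dx + (μ/2)∫₀ᴸ|θ−η_x|²dx + (1/2)∫₀ᴸ(ξε₃|θ_t+φ_x|² + ε₃|η_t+φ|²)dx along smooth solutions of the damped Lorenz piezoelectric system. Then dE/dt = −a∫₀ᴸ|v_t|²dx − bξε₃∫₀ᴸ|θ_t+φ_x|²dx − cε₃∫₀ᴸ|η_t+φ|²dx ≤ 0 for a, b, c ≥ 0; i.e., E is nonincreasing. -/

import Mathlib

open Set Function MeasureTheory intervalIntegral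

/-- Partial derivative in time (second variable). -/
noncomputable def pt (f : ℝ → ℝ → ℝ) (x t : ℝ) : ℝ := deriv (fun s => f x s) t

/-- Partial derivative in space (first variable). -/
noncomputable def px (f : ℝ → ℝ → ℝ) (x t : ℝ) : ℝ := deriv (fun y => f y t) x

/-- The natural energy of the Lorenz piezoelectric system. -/
noncomputable def energy (ρ α μ ξ ε₃ L : ℝ) (v φ θ η : ℝ → ℝ → ℝ) (t : ℝ) : ℝ :=
  ρ / 2 * (∫ x in (0:ℝ)..L, (pt v x t) ^ 2)
    + α / 2 * (∫ x in (0:ℝ)..L, (px v x t) ^ 2)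
    + μ / 2 * (∫ x in (0:ℝ)..L, (θ x t - px η x t) ^ 2)
    + 1 / 2 * (∫ x in (0:ℝ)..L,
        (ξ * ε₃ * (pt θ x t + px φ x t) ^ 2 + ε₃ * (pt η x t + φ x t) ^ 2))

section helpers

variable {f : ℝ → ℝ → ℝ} {x t : ℝ}

lemma hasDerivAt_slice1 {E : Type*} [NormedAddCommGroup E] [NormedSpace ℝ E]
    {g : ℝ × ℝ → E} (hg : DifferentiableAt ℝ g (x, t)) :
    HasDerivAt (fun y => g (y, t)) (fderiv ℝ g (x, t) (1, 0)) x := by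
  have h := hg.hasFDerivAt.comp_hasDerivAt x ((hasDerivAt_id x).prodMk (hasDerivAt_const x t))
  simpa [Function.comp_def] using h

lemma hasDerivAt_slice2 {E : Type*} [NormedAddCommGroup E] [NormedSpace ℝ E]
    {g : ℝ × ℝ → E} (hg : DifferentiableAt ℝ g (x, t)) :
    HasDerivAt (fun s => g (x, s)) (fderiv ℝ g (x, t) (0, 1)) t := by
  have h := hg.hasFDerivAt.comp_hasDerivAt t ((hasDerivAt_const t x).prodMk (hasDerivAt_id t))
  simpa [Function.comp_def] using h

lemma px_eq_fderiv (hf : ContDiff ℝ 1 (uncurry f)) (x t : ℝ) :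
    px f x t = fderiv ℝ (uncurry f) (x, t) (1, 0) :=
  (hasDerivAt_slice1 ((hf.differentiable one_ne_zero) (x, t))).deriv

lemma pt_eq_fderiv (hf : ContDiff ℝ 1 (uncurry f)) (x t : ℝ) :
    pt f x t = fderiv ℝ (uncurry f) (x, t) (0, 1) :=
  (hasDerivAt_slice2 ((hf.differentiable one_ne_zero) (x, t))).deriv

lemma hasDerivAt_px (hf : ContDiff ℝ 1 (uncurry f)) :
    HasDerivAt (fun y => f y t) (px f x t) x := by
  rw [px_eq_fderiv hf]
  exact hasDerivAt_slice1 ((hf.differentiable one_ne_zero) (x, t))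

lemma hasDerivAt_pt (hf : ContDiff ℝ 1 (uncurry f)) :
    HasDerivAt (fun s => f x s) (pt f x t) t := by
  rw [pt_eq_fderiv hf]
  exact hasDerivAt_slice2 ((hf.differentiable one_ne_zero) (x, t))

lemma contDiff_px (hf : ContDiff ℝ 2 (uncurry f)) : ContDiff ℝ 1 (uncurry (px f)) := by
  have h : ContDiff ℝ 1 (fun p : ℝ × ℝ => fderiv ℝ (uncurry f) p ((1:ℝ), (0:ℝ))) :=
    (hf.fderiv_right le_rfl).clm_apply contDiff_const
  have he : uncurry (px f) = fun p : ℝ × ℝ => fderiv ℝ (uncurry f) p ((1:ℝ), (0:ℝ)) := by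
    funext p
    exact px_eq_fderiv (hf.of_le one_le_two) p.1 p.2
  rw [he]; exact h

lemma contDiff_pt (hf : ContDiff ℝ 2 (uncurry f)) : ContDiff ℝ 1 (uncurry (pt f)) := by
  have h : ContDiff ℝ 1 (fun p : ℝ × ℝ => fderiv ℝ (uncurry f) p ((0:ℝ), (1:ℝ))) :=
    (hf.fderiv_right le_rfl).clm_apply contDiff_const
  have he : uncurry (pt f) = fun p : ℝ × ℝ => fderiv ℝ (uncurry f) p ((0:ℝ), (1:ℝ)) := by
    funext p
    exact pt_eq_fderiv (hf.of_le one_le_two) p.1 p.2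
  rw [he]; exact h

lemma continuous_px_slice (hf : ContDiff ℝ 1 (uncurry f)) (t : ℝ) :
    Continuous (fun x => px f x t) := by
  have h : Continuous (fun p : ℝ × ℝ => fderiv ℝ (uncurry f) p) := hf.continuous_fderiv one_ne_zero
  have h2 : Continuous (fun x : ℝ => fderiv ℝ (uncurry f) (x, t) ((1:ℝ), (0:ℝ))) :=
    (h.comp (continuous_id.prodMk continuous_const)).clm_apply continuous_const
  have he : (fun x => px f x t) = fun x : ℝ => fderiv ℝ (uncurry f) (x, t) ((1:ℝ), (0:ℝ)) := by
    funext y; exact px_eq_fderiv hf y t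
  rw [he]; exact h2

lemma continuous_pt_uncurry (hf : ContDiff ℝ 1 (uncurry f)) :
    Continuous (fun p : ℝ × ℝ => pt f p.1 p.2) := by
  have h : Continuous (fun p : ℝ × ℝ => fderiv ℝ (uncurry f) p) := hf.continuous_fderiv one_ne_zero
  have h2 : Continuous (fun p : ℝ × ℝ => fderiv ℝ (uncurry f) p ((0:ℝ), (1:ℝ))) :=
    h.clm_apply continuous_const
  have he : (fun p : ℝ × ℝ => pt f p.1 p.2)
      = fun p : ℝ × ℝ => fderiv ℝ (uncurry f) p ((0:ℝ), (1:ℝ)) := by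
    funext p; exact pt_eq_fderiv hf p.1 p.2
  rw [he]; exact h2

lemma clairaut (hf : ContDiff ℝ 2 (uncurry f)) (x t : ℝ) :
    pt (px f) x t = px (pt f) x t := by
  have hf1 : ContDiff ℝ 1 (uncurry f) := hf.of_le one_le_two
  have hG : ContDiff ℝ 1 (fderiv ℝ (uncurry f)) := hf.fderiv_right le_rfl
  have h1 : HasDerivAt (fun s => fderiv ℝ (uncurry f) (x, s) ((1:ℝ),(0:ℝ)))
      (fderiv ℝ (fderiv ℝ (uncurry f)) (x, t) (0, 1) (1, 0)) t := by
    have := hasDerivAt_slice2 ((hG.differentiable one_ne_zero) (x, t))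
    simpa using this.clm_apply (hasDerivAt_const t ((1:ℝ),(0:ℝ)))
  have h2 : HasDerivAt (fun y => fderiv ℝ (uncurry f) (y, t) ((0:ℝ),(1:ℝ)))
      (fderiv ℝ (fderiv ℝ (uncurry f)) (x, t) (1, 0) (0, 1)) x := by
    have := hasDerivAt_slice1 ((hG.differentiable one_ne_zero) (x, t))
    simpa using this.clm_apply (hasDerivAt_const x ((0:ℝ),(1:ℝ)))
  have e1 : pt (px f) x t = fderiv ℝ (fderiv ℝ (uncurry f)) (x, t) (0, 1) (1, 0) := by
    have he : (fun s => px f x s) = fun s => fderiv ℝ (uncurry f) (x, s) ((1:ℝ),(0:ℝ)) := by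
      funext s; exact px_eq_fderiv hf1 x s
    show deriv (fun s => px f x s) t = _
    rw [he]; exact h1.deriv
  have e2 : px (pt f) x t = fderiv ℝ (fderiv ℝ (uncurry f)) (x, t) (1, 0) (0, 1) := by
    have he : (fun y => pt f y t) = fun y => fderiv ℝ (uncurry f) (y, t) ((0:ℝ),(1:ℝ)) := by
      funext y; exact pt_eq_fderiv hf1 y t
    show deriv (fun y => pt f y t) x = _
    rw [he]; exact h2.deriv
  rw [e1, e2]
  exact (hf.contDiffAt.isSymmSndFDerivAt (by simp [minSmoothness_of_isRCLikeNormedField])) _ _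

lemma hasDerivAt_integral_of_contDiff {e : ℝ → ℝ → ℝ} (he : ContDiff ℝ 1 (uncurry e))
    (L t₀ : ℝ) :
    HasDerivAt (fun τ => ∫ x in (0:ℝ)..L, e x τ) (∫ x in (0:ℝ)..L, pt e x t₀) t₀ := by
  have hec : Continuous (uncurry e) := he.continuous
  have hptc : Continuous (fun p : ℝ × ℝ => pt e p.1 p.2) := continuous_pt_uncurry he
  obtain ⟨M, hM⟩ := (isCompact_uIcc.prod (isCompact_Icc (a := t₀ - 1) (b := t₀ + 1))).exists_bound_of_continuousOn
    hptc.continuousOn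
  have key := intervalIntegral.hasDerivAt_integral_of_dominated_loc_of_deriv_le
    (F := fun τ x => e x τ) (F' := fun τ x => pt e x τ) (x₀ := t₀) (a := (0:ℝ)) (b := L)
    (bound := fun _ => M) (s := Metric.ball t₀ 1) (μ := MeasureTheory.volume) (Metric.ball_mem_nhds t₀ one_pos)
    (Filter.Eventually.of_forall (fun τ =>
      ((hec.comp (continuous_id.prodMk continuous_const)).aestronglyMeasurable)))
    ((hec.comp (continuous_id.prodMk continuous_const)).intervalIntegrable 0 L)
    ((hptc.comp (continuous_id.prodMk continuous_const)).aestronglyMeasurable)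
    (Filter.Eventually.of_forall (fun x hx τ hτ => by
      have : (x, τ) ∈ uIcc (0:ℝ) L ×ˢ Icc (t₀ - 1) (t₀ + 1) := by
        constructor
        · exact uIoc_subset_uIcc hx
        · have := Metric.mem_ball.mp hτ
          rw [Real.dist_eq] at this
          constructor <;> [linarith [neg_abs_le (τ - t₀)]; linarith [le_abs_self (τ - t₀)]]
      simpa using hM _ this))
    (intervalIntegrable_const)
    (Filter.Eventually.of_forall (fun x _ τ _ => hasDerivAt_pt he))
  exact key.2

end helpers

private noncomputable def ed (ρ α μ ξ ε₃ : ℝ) (v φ θ η : ℝ → ℝ → ℝ) (x t : ℝ) : ℝ :=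
  ρ / 2 * (pt v x t) ^ 2 + α / 2 * (px v x t) ^ 2 + μ / 2 * (θ x t - px η x t) ^ 2
    + 1 / 2 * (ξ * ε₃ * (pt θ x t + px φ x t) ^ 2 + ε₃ * (pt η x t + φ x t) ^ 2)

private noncomputable def fl (α γ μ : ℝ) (v φ θ η : ℝ → ℝ → ℝ) (x t : ℝ) : ℝ :=
  α * px v x t * pt v x t + γ * pt v x t * (φ x t + pt η x t)
    - μ * (θ x t - px η x t) * (pt η x t + φ x t)

/-- energy dissipation identity for the damped Lorenz piezoelectric
system: E'(t) = −a∫|v_t|² − bξε₃∫|θ_t+φ_x|² − cε₃∫|η_t+φ|² ≤ 0, so E is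
nonincreasing. -/
theorem stmt_15 (ρ α γ μ ξ ε₃ L a b c : ℝ)
    (hρ : 0 < ρ) (hα : 0 < α) (hγ : 0 < γ) (hμ : 0 < μ) (hξ : 0 < ξ)
    (hε : 0 < ε₃) (hL : 0 < L) (ha : 0 ≤ a) (hb : 0 ≤ b) (hc : 0 ≤ c)
    (v φ θ η : ℝ → ℝ → ℝ)
    (hv : ContDiff ℝ 2 (Function.uncurry v)) (hφ : ContDiff ℝ 2 (Function.uncurry φ))
    (hθ : ContDiff ℝ 2 (Function.uncurry θ)) (hη : ContDiff ℝ 2 (Function.uncurry η))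
    -- the Lorenz piezoelectric system:
    (eqv : ∀ x ∈ Icc (0:ℝ) L, ∀ t : ℝ, 0 ≤ t →
      ρ * pt (pt v) x t - α * px (px v) x t
        - γ * px (fun y s => φ y s + pt η y s) x t + a * pt v x t = 0)
    (eqφ : ∀ x ∈ Icc (0:ℝ) L, ∀ t : ℝ, 0 ≤ t →
      pt (pt φ) x t - (μ / ε₃) * px (px φ) x t + (μ / (ξ * ε₃)) * φ x t
        - (γ * μ / (ξ * ε₃ ^ 2)) * px v x t = 0)
    (eqθ : ∀ x ∈ Icc (0:ℝ) L, ∀ t : ℝ, 0 ≤ t →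
      pt (pt θ) x t - (μ / ε₃) * px (px θ) x t + (μ / (ξ * ε₃)) * θ x t
        + b * (pt θ x t + px φ x t) = 0)
    (eqη : ∀ x ∈ Icc (0:ℝ) L, ∀ t : ℝ, 0 ≤ t →
      pt (pt η) x t - (μ / ε₃) * px (px η) x t + (μ / (ξ * ε₃)) * η x t
        - (γ / ε₃) * px (pt v) x t + c * (pt η x t + φ x t) = 0)
    -- boundary conditions:
    (bc1 : ∀ t : ℝ, 0 ≤ t → v 0 t = 0)
    (bc2 : ∀ t : ℝ, 0 ≤ t → α * px v L t + γ * φ L t + γ * pt η L t = 0)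
    (bc3 : ∀ t : ℝ, 0 ≤ t → px φ 0 t = 0 ∧ px φ L t = 0)
    (bc4 : ∀ t : ℝ, 0 ≤ t → px η 0 t = 0 ∧ px η L t = 0)
    (bc5 : ∀ t : ℝ, 0 ≤ t → θ 0 t = 0 ∧ θ L t = 0)
    -- Lorenz gauge condition:
    (gauge : ∀ x ∈ Icc (0:ℝ) L, ∀ t : ℝ, 0 ≤ t →
      -ξ * px θ x t + η x t = (ξ * ε₃ / μ) * pt φ x t) :
    (∀ t : ℝ, 0 ≤ t →
      HasDerivAt (energy ρ α μ ξ ε₃ L v φ θ η)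
        (-(a * ∫ x in (0:ℝ)..L, (pt v x t) ^ 2)
          - b * ξ * ε₃ * (∫ x in (0:ℝ)..L, (pt θ x t + px φ x t) ^ 2)
          - c * ε₃ * (∫ x in (0:ℝ)..L, (pt η x t + φ x t) ^ 2)) t ∧
      (-(a * ∫ x in (0:ℝ)..L, (pt v x t) ^ 2)
          - b * ξ * ε₃ * (∫ x in (0:ℝ)..L, (pt θ x t + px φ x t) ^ 2)
          - c * ε₃ * (∫ x in (0:ℝ)..L, (pt η x t + φ x t) ^ 2)) ≤ 0) ∧
    AntitoneOn (energy ρ α μ ξ ε₃ L v φ θ η) (Ici 0) := by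

  -- C¹ facts
  have hv1 : ContDiff ℝ 1 (uncurry v) := hv.of_le one_le_two
  have hφ1 : ContDiff ℝ 1 (uncurry φ) := hφ.of_le one_le_two
  have hθ1 : ContDiff ℝ 1 (uncurry θ) := hθ.of_le one_le_two
  have hη1 : ContDiff ℝ 1 (uncurry η) := hη.of_le one_le_two
  have hvt : ContDiff ℝ 1 (uncurry (pt v)) := contDiff_pt hv
  have hvx : ContDiff ℝ 1 (uncurry (px v)) := contDiff_px hv
  have hφt : ContDiff ℝ 1 (uncurry (pt φ)) := contDiff_pt hφ
  have hφx : ContDiff ℝ 1 (uncurry (px φ)) := contDiff_px hφ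
  have hθt : ContDiff ℝ 1 (uncurry (pt θ)) := contDiff_pt hθ
  have hθx : ContDiff ℝ 1 (uncurry (px θ)) := contDiff_px hθ
  have hηt : ContDiff ℝ 1 (uncurry (pt η)) := contDiff_pt hη
  have hηx : ContDiff ℝ 1 (uncurry (px η)) := contDiff_px hη
  -- ContDiff of the energy density and the flux
  have hed : ContDiff ℝ 1 (uncurry (ed ρ α μ ξ ε₃ v φ θ η)) := by
    have Hvt : ContDiff ℝ 1 (fun p : ℝ × ℝ => pt v p.1 p.2) := hvt
    have Hvx : ContDiff ℝ 1 (fun p : ℝ × ℝ => px v p.1 p.2) := hvx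
    have Hθ : ContDiff ℝ 1 (fun p : ℝ × ℝ => θ p.1 p.2) := hθ1
    have Hex : ContDiff ℝ 1 (fun p : ℝ × ℝ => px η p.1 p.2) := hηx
    have Hθt : ContDiff ℝ 1 (fun p : ℝ × ℝ => pt θ p.1 p.2) := hθt
    have Hφx : ContDiff ℝ 1 (fun p : ℝ × ℝ => px φ p.1 p.2) := hφx
    have Hηt : ContDiff ℝ 1 (fun p : ℝ × ℝ => pt η p.1 p.2) := hηt
    have Hφ : ContDiff ℝ 1 (fun p : ℝ × ℝ => φ p.1 p.2) := hφ1
    exact (((contDiff_const.mul (Hvt.pow 2)).add (contDiff_const.mul (Hvx.pow 2))).add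
      (contDiff_const.mul ((Hθ.sub Hex).pow 2))).add
      (contDiff_const.mul ((contDiff_const.mul ((Hθt.add Hφx).pow 2)).add
        (contDiff_const.mul ((Hηt.add Hφ).pow 2))))
  have hfl : ContDiff ℝ 1 (uncurry (fl α γ μ v φ θ η)) := by
    have Hvt : ContDiff ℝ 1 (fun p : ℝ × ℝ => pt v p.1 p.2) := hvt
    have Hvx : ContDiff ℝ 1 (fun p : ℝ × ℝ => px v p.1 p.2) := hvx
    have Hθ : ContDiff ℝ 1 (fun p : ℝ × ℝ => θ p.1 p.2) := hθ1
    have Hex : ContDiff ℝ 1 (fun p : ℝ × ℝ => px η p.1 p.2) := hηx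
    have Hηt : ContDiff ℝ 1 (fun p : ℝ × ℝ => pt η p.1 p.2) := hηt
    have Hφ : ContDiff ℝ 1 (fun p : ℝ × ℝ => φ p.1 p.2) := hφ1
    exact (((contDiff_const.mul Hvx).mul Hvt).add
      ((contDiff_const.mul Hvt).mul (Hφ.add Hηt))).sub
      ((contDiff_const.mul (Hθ.sub Hex)).mul (Hηt.add Hφ))
  -- boundary: time derivative of v at x = 0 vanishes
  have hvt0 : ∀ s : ℝ, 0 ≤ s → pt v 0 s = 0 := by
    intro s hs
    rcases eq_or_lt_of_le hs with h | h
    · have hD : HasDerivAt (fun r => v 0 r) (pt v 0 s) s := hasDerivAt_pt hv1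
      have hW : HasDerivWithinAt (fun r => v 0 r) 0 (Ici s) s := by
        refine ((hasDerivAt_const s (0:ℝ)).hasDerivWithinAt).congr (fun y hy => ?_) ?_
        · exact bc1 y (le_trans hs hy)
        · exact bc1 s hs
      have h1 := hW.derivWithin (uniqueDiffOn_Ici s s self_mem_Ici)
      have h2 := (hD.hasDerivWithinAt (s := Ici s)).derivWithin (uniqueDiffOn_Ici s s self_mem_Ici)
      rw [h1] at h2; exact h2.symm
    · have heq : (fun r => v 0 r) =ᶠ[nhds s] fun _ => (0:ℝ) := by
        filter_upwards [Ioi_mem_nhds h] with r hr using bc1 r hr.le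
      show deriv (fun r => v 0 r) s = 0
      rw [heq.deriv_eq, deriv_const]
  -- main derivative fact
  have main : ∀ t : ℝ, 0 ≤ t →
      HasDerivAt (energy ρ α μ ξ ε₃ L v φ θ η)
        (-(a * ∫ x in (0:ℝ)..L, (pt v x t) ^ 2)
          - b * ξ * ε₃ * (∫ x in (0:ℝ)..L, (pt θ x t + px φ x t) ^ 2)
          - c * ε₃ * (∫ x in (0:ℝ)..L, (pt η x t + φ x t) ^ 2)) t := by
    intro t ht
    -- pointwise energy identity
    have hpoint : ∀ x ∈ Ioo (0:ℝ) L,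
        pt (ed ρ α μ ξ ε₃ v φ θ η) x t
          = (-(a * (pt v x t) ^ 2) - b * ξ * ε₃ * (pt θ x t + px φ x t) ^ 2
              - c * ε₃ * (pt η x t + φ x t) ^ 2)
            + px (fl α γ μ v φ θ η) x t := by
      intro x hx
      have hxI : x ∈ Icc (0:ℝ) L := Ioo_subset_Icc_self hx
      -- time slices
      have Hvt : HasDerivAt (fun s => pt v x s) (pt (pt v) x t) t := hasDerivAt_pt hvt
      have Hvx : HasDerivAt (fun s => px v x s) (pt (px v) x t) t := hasDerivAt_pt hvx
      have Hθ : HasDerivAt (fun s => θ x s) (pt θ x t) t := hasDerivAt_pt hθ1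
      have Hex : HasDerivAt (fun s => px η x s) (pt (px η) x t) t := hasDerivAt_pt hηx
      have Hθt : HasDerivAt (fun s => pt θ x s) (pt (pt θ) x t) t := hasDerivAt_pt hθt
      have Hφx : HasDerivAt (fun s => px φ x s) (pt (px φ) x t) t := hasDerivAt_pt hφx
      have Hηt : HasDerivAt (fun s => pt η x s) (pt (pt η) x t) t := hasDerivAt_pt hηt
      have Hφ : HasDerivAt (fun s => φ x s) (pt φ x t) t := hasDerivAt_pt hφ1
      have H1a := ((((Hθt.add Hφx).pow 2).const_mul (ξ*ε₃)).add
        (((Hηt.add Hφ).pow 2).const_mul ε₃)).const_mul (1/2)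
      have H1 := ((((Hvt.pow 2).const_mul (ρ/2)).add ((Hvx.pow 2).const_mul (α/2))).add
        (((Hθ.sub Hex).pow 2).const_mul (μ/2))).add H1a
      have ed_eq : pt (ed ρ α μ ξ ε₃ v φ θ η) x t
          = ρ * pt v x t * pt (pt v) x t + α * px v x t * pt (px v) x t
            + μ * (θ x t - px η x t) * (pt θ x t - pt (px η) x t)
            + ξ * ε₃ * (pt θ x t + px φ x t) * (pt (pt θ) x t + pt (px φ) x t)
            + ε₃ * (pt η x t + φ x t) * (pt (pt η) x t + pt φ x t) :=
        H1.deriv.trans (by simp only [Pi.add_apply, Pi.sub_apply, Pi.mul_apply, Pi.pow_apply]; ring)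
      -- space slices
      have Hvt' : HasDerivAt (fun y => pt v y t) (px (pt v) x t) x := hasDerivAt_px hvt
      have Hvx' : HasDerivAt (fun y => px v y t) (px (px v) x t) x := hasDerivAt_px hvx
      have Hθ' : HasDerivAt (fun y => θ y t) (px θ x t) x := hasDerivAt_px hθ1
      have Hex' : HasDerivAt (fun y => px η y t) (px (px η) x t) x := hasDerivAt_px hηx
      have Hηt' : HasDerivAt (fun y => pt η y t) (px (pt η) x t) x := hasDerivAt_px hηt
      have Hφ' : HasDerivAt (fun y => φ y t) (px φ x t) x := hasDerivAt_px hφ1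
      have Hφx' : HasDerivAt (fun y => px φ y t) (px (px φ) x t) x := hasDerivAt_px hφx
      have H2 := ((((Hvx'.const_mul α).mul Hvt').add
        ((Hvt'.const_mul γ).mul (Hφ'.add Hηt'))).sub
        (((Hθ'.sub Hex').const_mul μ).mul (Hηt'.add Hφ')))
      have fl_eq : px (fl α γ μ v φ θ η) x t
          = α * (px (px v) x t * pt v x t + px v x t * px (pt v) x t)
            + γ * (px (pt v) x t * (φ x t + pt η x t)
                + pt v x t * (px φ x t + px (pt η) x t))
            - μ * ((px θ x t - px (px η) x t) * (pt η x t + φ x t)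
                + (θ x t - px η x t) * (px (pt η) x t + px φ x t)) :=
        H2.deriv.trans (by simp only [Pi.add_apply, Pi.sub_apply, Pi.mul_apply, Pi.pow_apply]; ring)
      -- equations at (x, t)
      have Ev := eqv x hxI t ht
      have hsum : px (fun y s => φ y s + pt η y s) x t = px φ x t + px (pt η) x t :=
        ((hasDerivAt_px hφ1).add (hasDerivAt_px hηt)).deriv
      rw [hsum] at Ev
      have Eθ := eqθ x hxI t ht
      have Eη := eqη x hxI t ht
      have G := gauge x hxI t ht
      have Gx : -ξ * px (px θ) x t + px η x t = ξ * ε₃ / μ * px (pt φ) x t := by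
        have h1 : HasDerivAt (fun y => -ξ * px θ y t + η y t)
            (-ξ * px (px θ) x t + px η x t) x :=
          ((hasDerivAt_px hθx).const_mul (-ξ)).add (hasDerivAt_px hη1)
        have h2 : HasDerivAt (fun y => ξ * ε₃ / μ * pt φ y t)
            (ξ * ε₃ / μ * px (pt φ) x t) x := (hasDerivAt_px hφt).const_mul _
        have heq : (fun y => -ξ * px θ y t + η y t)
            =ᶠ[nhds x] (fun y => ξ * ε₃ / μ * pt φ y t) := by
          filter_upwards [Ioo_mem_nhds hx.1 hx.2] with y hy
            using gauge y (Ioo_subset_Icc_self hy) t ht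
        exact (h1.congr_of_eventuallyEq heq.symm).unique h2
      have Cv := clairaut hv x t
      have Cφ := clairaut hφ x t
      have Cη := clairaut hη x t
      have hxi : ξ ≠ 0 := ne_of_gt hξ
      have heps : ε₃ ≠ 0 := ne_of_gt hε
      have hmu : μ ≠ 0 := ne_of_gt hμ
      field_simp at Eθ Eη G Gx
      rw [ed_eq, fl_eq]
      refine mul_left_cancel₀ (show ξ * ε₃ ^ 3 ≠ 0 by positivity) ?_
      linear_combination (ξ * ε₃ ^ 3 * pt v x t) * Ev
        + (ξ * ε₃ ^ 3 * (pt θ x t + px φ x t)) * Eθ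
        + (ε₃ ^ 3 * (pt η x t + φ x t)) * Eη
        - (ε₃ ^ 3 * (pt η x t + φ x t)) * G
        - (ξ * ε₃ ^ 3 * (pt θ x t + px φ x t)) * Gx
        + (ξ * ε₃ ^ 3 * α * px v x t) * Cv
        + (ξ ^ 2 * ε₃ ^ 4 * (pt θ x t + px φ x t)) * Cφ
        - (ξ * ε₃ ^ 3 * μ * (θ x t - px η x t)) * Cη
    -- energy as a single integral
    have hEfun : energy ρ α μ ξ ε₃ L v φ θ η
        = fun τ => ∫ x in (0:ℝ)..L, ed ρ α μ ξ ε₃ v φ θ η x τ := by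
      funext τ
      have cvt : Continuous fun x => pt v x τ :=
        hvt.continuous.comp (continuous_id.prodMk continuous_const)
      have cvx : Continuous fun x => px v x τ :=
        hvx.continuous.comp (continuous_id.prodMk continuous_const)
      have cθ : Continuous fun x => θ x τ :=
        hθ1.continuous.comp (continuous_id.prodMk continuous_const)
      have cex : Continuous fun x => px η x τ :=
        hηx.continuous.comp (continuous_id.prodMk continuous_const)
      have cθt : Continuous fun x => pt θ x τ :=
        hθt.continuous.comp (continuous_id.prodMk continuous_const)
      have cφx : Continuous fun x => px φ x τ :=
        hφx.continuous.comp (continuous_id.prodMk continuous_const)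
      have cηt : Continuous fun x => pt η x τ :=
        hηt.continuous.comp (continuous_id.prodMk continuous_const)
      have cφ : Continuous fun x => φ x τ :=
        hφ1.continuous.comp (continuous_id.prodMk continuous_const)
      have iA : IntervalIntegrable (fun x => ρ / 2 * (pt v x τ) ^ 2) volume 0 L :=
        (continuous_const.mul (cvt.pow 2)).intervalIntegrable 0 L
      have iB : IntervalIntegrable (fun x => α / 2 * (px v x τ) ^ 2) volume 0 L :=
        (continuous_const.mul (cvx.pow 2)).intervalIntegrable 0 L
      have iC : IntervalIntegrable (fun x => μ / 2 * (θ x τ - px η x τ) ^ 2) volume 0 L :=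
        (continuous_const.mul ((cθ.sub cex).pow 2)).intervalIntegrable 0 L
      have iD : IntervalIntegrable (fun x => 1 / 2 * (ξ * ε₃ * (pt θ x τ + px φ x τ) ^ 2
          + ε₃ * (pt η x τ + φ x τ) ^ 2)) volume 0 L :=
        (continuous_const.mul ((continuous_const.mul ((cθt.add cφx).pow 2)).add
          (continuous_const.mul ((cηt.add cφ).pow 2)))).intervalIntegrable 0 L
      have hsum : (∫ x in (0:ℝ)..L, ed ρ α μ ξ ε₃ v φ θ η x τ)
          = (∫ x in (0:ℝ)..L, ρ / 2 * (pt v x τ) ^ 2)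
            + (∫ x in (0:ℝ)..L, α / 2 * (px v x τ) ^ 2)
            + (∫ x in (0:ℝ)..L, μ / 2 * (θ x τ - px η x τ) ^ 2)
            + (∫ x in (0:ℝ)..L, 1 / 2 * (ξ * ε₃ * (pt θ x τ + px φ x τ) ^ 2
                + ε₃ * (pt η x τ + φ x τ) ^ 2)) := by
        rw [show (fun x => ed ρ α μ ξ ε₃ v φ θ η x τ)
            = fun x => (ρ / 2 * (pt v x τ) ^ 2 + α / 2 * (px v x τ) ^ 2
              + μ / 2 * (θ x τ - px η x τ) ^ 2)
              + 1 / 2 * (ξ * ε₃ * (pt θ x τ + px φ x τ) ^ 2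
                + ε₃ * (pt η x τ + φ x τ) ^ 2) from rfl]
        rw [integral_add ((iA.add iB).add iC) iD, integral_add (iA.add iB) iC,
          integral_add iA iB]
      rw [hsum]
      simp only [energy]
      rw [intervalIntegral.integral_const_mul, intervalIntegral.integral_const_mul,
        intervalIntegral.integral_const_mul, intervalIntegral.integral_const_mul]
    -- differentiate under the integral sign
    have hD := hasDerivAt_integral_of_contDiff hed L t
    rw [← hEfun] at hD
    -- rewrite the resulting integral
    have cvt : Continuous fun x => pt v x t :=
      hvt.continuous.comp (continuous_id.prodMk continuous_const)
    have cθt : Continuous fun x => pt θ x t :=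
      hθt.continuous.comp (continuous_id.prodMk continuous_const)
    have cφx : Continuous fun x => px φ x t :=
      hφx.continuous.comp (continuous_id.prodMk continuous_const)
    have cηt : Continuous fun x => pt η x t :=
      hηt.continuous.comp (continuous_id.prodMk continuous_const)
    have cφ : Continuous fun x => φ x t :=
      hφ1.continuous.comp (continuous_id.prodMk continuous_const)
    have i1 : IntervalIntegrable (fun x => (pt v x t) ^ 2) volume 0 L :=
      ((cvt.pow 2)).intervalIntegrable 0 L
    have i2 : IntervalIntegrable (fun x => (pt θ x t + px φ x t) ^ 2) volume 0 L :=
      (((cθt.add cφx).pow 2)).intervalIntegrable 0 L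
    have i3 : IntervalIntegrable (fun x => (pt η x t + φ x t) ^ 2) volume 0 L :=
      (((cηt.add cφ).pow 2)).intervalIntegrable 0 L
    have idd : IntervalIntegrable (fun x => -(a * (pt v x t) ^ 2)
        - b * ξ * ε₃ * (pt θ x t + px φ x t) ^ 2
        - c * ε₃ * (pt η x t + φ x t) ^ 2) volume 0 L :=
      (((continuous_const.mul (cvt.pow 2)).neg.sub
        (continuous_const.mul ((cθt.add cφx).pow 2))).sub
        (continuous_const.mul ((cηt.add cφ).pow 2))).intervalIntegrable 0 L
    have ipf : IntervalIntegrable (fun x => px (fl α γ μ v φ θ η) x t) volume 0 L :=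
      (continuous_px_slice hfl t).intervalIntegrable 0 L
    have hae : ∀ᵐ (x : ℝ), x ≠ L := by
      rw [MeasureTheory.ae_iff]
      simp only [ne_eq, not_not, Set.setOf_eq_eq_singleton]
      exact Real.volume_singleton
    have hcongr : (∫ x in (0:ℝ)..L, pt (ed ρ α μ ξ ε₃ v φ θ η) x t)
        = ∫ x in (0:ℝ)..L, ((-(a * (pt v x t) ^ 2)
            - b * ξ * ε₃ * (pt θ x t + px φ x t) ^ 2
            - c * ε₃ * (pt η x t + φ x t) ^ 2)
          + px (fl α γ μ v φ θ η) x t) := by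
      apply intervalIntegral.integral_congr_ae
      filter_upwards [hae] with x hxl hxI
      rw [uIoc_of_le hL.le] at hxI
      exact hpoint x ⟨hxI.1, lt_of_le_of_ne hxI.2 hxl⟩
    have hFTC : (∫ x in (0:ℝ)..L, px (fl α γ μ v φ θ η) x t)
        = fl α γ μ v φ θ η L t - fl α γ μ v φ θ η 0 t :=
      intervalIntegral.integral_eq_sub_of_hasDerivAt
        (fun x _ => hasDerivAt_px hfl) ipf
    have hfl0 : fl α γ μ v φ θ η 0 t = 0 := by
      have h1 := hvt0 t ht
      have h2 := (bc5 t ht).1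
      have h3 := (bc4 t ht).1
      simp only [fl]
      rw [h1, h2, h3]; ring
    have hflL : fl α γ μ v φ θ η L t = 0 := by
      have h2 := bc2 t ht
      have h5 := (bc5 t ht).2
      have h4 := (bc4 t ht).2
      simp only [fl]
      linear_combination (pt v L t) * h2
        - μ * (pt η L t + φ L t) * h5 + μ * (pt η L t + φ L t) * h4
    have hval : (∫ x in (0:ℝ)..L, pt (ed ρ α μ ξ ε₃ v φ θ η) x t)
        = -(a * ∫ x in (0:ℝ)..L, (pt v x t) ^ 2)
          - b * ξ * ε₃ * (∫ x in (0:ℝ)..L, (pt θ x t + px φ x t) ^ 2)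
          - c * ε₃ * (∫ x in (0:ℝ)..L, (pt η x t + φ x t) ^ 2) := by
      rw [hcongr, integral_add idd ipf, hFTC, hfl0, hflL,
        integral_sub (f := fun x => -(a * (pt v x t) ^ 2) - b * ξ * ε₃ * (pt θ x t + px φ x t) ^ 2)
          (g := fun x => c * ε₃ * (pt η x t + φ x t) ^ 2)
          ((continuous_const.mul (cvt.pow 2)).neg.intervalIntegrable 0 L |>.sub
          ((continuous_const.mul ((cθt.add cφx).pow 2)).intervalIntegrable 0 L))
          ((continuous_const.mul ((cηt.add cφ).pow 2)).intervalIntegrable 0 L),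
        integral_sub (f := fun x => -(a * (pt v x t) ^ 2))
          (g := fun x => b * ξ * ε₃ * (pt θ x t + px φ x t) ^ 2)
          ((continuous_const.mul (cvt.pow 2)).neg.intervalIntegrable 0 L)
          ((continuous_const.mul ((cθt.add cφx).pow 2)).intervalIntegrable 0 L),
        intervalIntegral.integral_neg, intervalIntegral.integral_const_mul,
        intervalIntegral.integral_const_mul, intervalIntegral.integral_const_mul]
      ring
    rw [hval] at hD
    exact hD
  have nonpos : ∀ t : ℝ, 0 ≤ t →
      (-(a * ∫ x in (0:ℝ)..L, (pt v x t) ^ 2)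
        - b * ξ * ε₃ * (∫ x in (0:ℝ)..L, (pt θ x t + px φ x t) ^ 2)
        - c * ε₃ * (∫ x in (0:ℝ)..L, (pt η x t + φ x t) ^ 2)) ≤ 0 := by
    intro t ht
    have n1 : 0 ≤ ∫ x in (0:ℝ)..L, (pt v x t) ^ 2 :=
      intervalIntegral.integral_nonneg hL.le (fun u _ => sq_nonneg _)
    have n2 : 0 ≤ ∫ x in (0:ℝ)..L, (pt θ x t + px φ x t) ^ 2 :=
      intervalIntegral.integral_nonneg hL.le (fun u _ => sq_nonneg _)
    have n3 : 0 ≤ ∫ x in (0:ℝ)..L, (pt η x t + φ x t) ^ 2 :=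
      intervalIntegral.integral_nonneg hL.le (fun u _ => sq_nonneg _)
    have m1 := mul_nonneg ha n1
    have m2 := mul_nonneg (mul_nonneg (mul_nonneg hb hξ.le) hε.le) n2
    have m3 := mul_nonneg (mul_nonneg hc hε.le) n3
    linarith
  refine ⟨fun t ht => ⟨main t ht, nonpos t ht⟩, ?_⟩
  apply antitoneOn_of_deriv_nonpos (convex_Ici 0)
  · exact fun s hs => (main s hs).continuousAt.continuousWithinAt
  · rw [interior_Ici]
    exact fun s hs => (main s hs.le).differentiableAt.differentiableWithinAt
  · intro s hs
    rw [interior_Ici] at hs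
    rw [(main s hs.le).deriv]
    exact nonpos s hs.le
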